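/- If w ∈ R_n(12/3, 1/24/3) has the form w = ab with a strictly increasing 1 2 ... m and b a nonempty terminal block of 1s, then lb(w) = (m−1)·|b| and rs(w) = |a| − 1; if instead b is a block of m's (possibly empty), then lb(w) = 0 and rs(w) = 0. -/

import Mathlib

/-- `w` is a restricted growth function: each letter is at least 1 and at most
one more than the maximum of the preceding letters (so the first letter is 1). -/
def IsRGF (w : List ℕ) : Prop :=
  ∀ i : Fin w.length, 1 ≤ w.get i ∧ w.get i ≤ ((w.take i.1).foldr max 0) + 1

/-- left-smaller statistic -/
def lsStat (w : List ℕ) : ℕ :=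
  ∑ i : Fin w.length, ((w.take i.1).toFinset.filter (fun v => v < w.get i)).card

/-- left-bigger statistic -/
def lbStat (w : List ℕ) : ℕ :=
  ∑ i : Fin w.length, ((w.take i.1).toFinset.filter (fun v => w.get i < v)).card

/-- right-smaller statistic -/
def rsStat (w : List ℕ) : ℕ :=
  ∑ i : Fin w.length, ((w.drop (i.1 + 1)).toFinset.filter (fun v => v < w.get i)).card

/-- right-bigger statistic -/
def rbStat (w : List ℕ) : ℕ :=
  ∑ i : Fin w.length, ((w.drop (i.1 + 1)).toFinset.filter (fun v => w.get i < v)).card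

/-- The word `w` (viewed as a set partition via block indices) contains the
pattern given by the RGF `p`: some subsequence of `w` has the same
same-block (equal-letter) relation as `p`. -/
def WContains (p w : List ℕ) : Prop :=
  ∃ f : Fin p.length → Fin w.length, StrictMono f ∧
    ∀ a b : Fin p.length, w.get (f a) = w.get (f b) ↔ p.get a = p.get b


lemma lbStat_eq' (w : List ℕ) :
    (∑ i : Fin w.length, ((w.take i.1).toFinset.filter (fun v => w.get i < v)).card) =
      ∑ i ∈ Finset.range w.length,
        ((w.take i).toFinset.filter (fun v => w.getD i 0 < v)).card := by
  rw [← Fin.sum_univ_eq_sum_range (fun i => ((w.take i).toFinset.filter (fun v => w.getD i 0 < v)).card)]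
  apply Finset.sum_congr rfl
  intro i _
  congr 1
  ext v
  simp [List.get_eq_getElem, List.getD_eq_getElem _ _ i.isLt]

lemma sum_range_add' (f : ℕ → ℕ) (a b : ℕ) :
    ∑ i ∈ Finset.range (a+b), f i = (∑ i ∈ Finset.range a, f i) + ∑ j ∈ Finset.range b, f (a+j) := by
  induction b with
  | zero => simp
  | succ n ih => rw [← Nat.add_assoc, Finset.sum_range_succ, ih, Finset.sum_range_succ, Nat.add_assoc]

lemma take_W (m k c : ℕ) {i : ℕ} (h : i ≤ m) :
    (List.range' 1 m ++ List.replicate k c).take i = List.range' 1 i := by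
  have h1 : List.range' 1 m = List.range' 1 i ++ List.range' (1+i) (m-i) := by
    rw [show (1:ℕ)+i = 1 + 1*i by ring, List.range'_append]
    congr 1; omega
  rw [h1, List.append_assoc, List.take_append_of_le_length (by simp)]
  simp

lemma take_W2 (m k c j : ℕ) :
    (List.range' 1 m ++ List.replicate k c).take (m + j) =
      List.range' 1 m ++ List.replicate (min j k) c := by
  rw [show m + j = (List.range' 1 m).length + j by simp, List.take_length_add_append, List.take_replicate]

lemma drop_W (m k c : ℕ) {i : ℕ} (hi : i < m) :
    (List.range' 1 m ++ List.replicate k c).drop (i + 1) =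
      List.range' (2 + i) (m - (i + 1)) ++ List.replicate k c := by
  have h1 : List.range' 1 m = List.range' 1 (i+1) ++ List.range' (2+i) (m-(i+1)) := by
    rw [show (2:ℕ)+i = 1 + 1*(i+1) by ring, List.range'_append]
    congr 1; omega
  rw [h1, List.append_assoc, List.drop_append_of_le_length (by simp)]
  simp

lemma drop_W2 (m k c j : ℕ) :
    (List.range' 1 m ++ List.replicate k c).drop (m + j + 1) =
      List.replicate (k - (j+1)) c := by
  rw [show m + j + 1 = (List.range' 1 m).length + (j+1) by simp [Nat.add_assoc], List.drop_length_add_append,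
    List.drop_replicate]

lemma getD_lt (m k c : ℕ) {i : ℕ} (hi : i < m) :
    (List.range' 1 m ++ List.replicate k c).getD i 0 = 1 + i := by
  rw [List.getD_eq_getElem _ _ (by simp; omega),
    List.getElem_append_left (by simpa using hi), List.getElem_range']
  simp

lemma getD_ge (m k c : ℕ) {j : ℕ} (hj : j < k) :
    (List.range' 1 m ++ List.replicate k c).getD (m + j) 0 = c := by
  rw [List.getD_eq_getElem _ _ (by simp; omega), List.getElem_append_right (by simp)]
  simp

lemma lbStat_eq (w : List ℕ) :
    lbStat w = ∑ i ∈ Finset.range w.length,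
        ((w.take i).toFinset.filter (fun v => w.getD i 0 < v)).card := by
  unfold lbStat
  exact lbStat_eq' w

lemma rsStat_eq (w : List ℕ) :
    rsStat w = ∑ i ∈ Finset.range w.length,
        ((w.drop (i+1)).toFinset.filter (fun v => v < w.getD i 0)).card := by
  unfold rsStat
  rw [← Fin.sum_univ_eq_sum_range (fun i => ((w.drop (i+1)).toFinset.filter (fun v => v < w.getD i 0)).card)]
  apply Finset.sum_congr rfl
  intro i _
  congr 1
  ext v
  simp [List.get_eq_getElem, List.getD_eq_getElem _ _ i.isLt]

theorem stmt16 (m k : ℕ) (hm : 1 ≤ m) :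
    (1 ≤ k →
      lbStat (List.range' 1 m ++ List.replicate k 1) = (m - 1) * k ∧
      rsStat (List.range' 1 m ++ List.replicate k 1) = m - 1) ∧
    (lbStat (List.range' 1 m ++ List.replicate k m) = 0 ∧
      rsStat (List.range' 1 m ++ List.replicate k m) = 0) := by
  have hlen : ∀ c : ℕ, (List.range' 1 m ++ List.replicate k c).length = m + k := by simp
  refine ⟨fun hk => ⟨?_, ?_⟩, ?_, ?_⟩
  · rw [lbStat_eq, hlen 1, sum_range_add']
    have h1 : (∑ i ∈ Finset.range m,
        (((List.range' 1 m ++ List.replicate k 1).take i).toFinset.filter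
          (fun v => (List.range' 1 m ++ List.replicate k 1).getD i 0 < v)).card) = 0 := by
      apply Finset.sum_eq_zero
      intro i hi
      rw [Finset.mem_range] at hi
      rw [getD_lt m k 1 hi, take_W m k 1 hi.le, Finset.card_eq_zero,
        Finset.filter_eq_empty_iff]
      intro v hv
      simp only [List.mem_toFinset, List.mem_range'_1] at hv
      omega
    have h2 : (∑ j ∈ Finset.range k,
        (((List.range' 1 m ++ List.replicate k 1).take (m + j)).toFinset.filter
          (fun v => (List.range' 1 m ++ List.replicate k 1).getD (m + j) 0 < v)).card) =
        ∑ _j ∈ Finset.range k, (m - 1) := by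
      apply Finset.sum_congr rfl
      intro j hj
      rw [Finset.mem_range] at hj
      rw [getD_ge m k 1 hj, take_W2]
      have he : ((List.range' 1 m ++ List.replicate (min j k) 1).toFinset.filter
          (fun v => 1 < v)) = Finset.Ico 2 (m+1) := by
        ext v
        simp only [Finset.mem_filter, List.mem_toFinset, List.mem_append, List.mem_range'_1,
          List.mem_replicate, Finset.mem_Ico]
        omega
      rw [he, Nat.card_Ico]
      omega
    rw [h1, h2, Nat.zero_add, Finset.sum_const, Finset.card_range, smul_eq_mul]
    exact Nat.mul_comm k (m-1)
  · rw [rsStat_eq, hlen 1, sum_range_add']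
    have h2 : (∑ j ∈ Finset.range k,
        (((List.range' 1 m ++ List.replicate k 1).drop (m + j + 1)).toFinset.filter
          (fun v => v < (List.range' 1 m ++ List.replicate k 1).getD (m + j) 0)).card) = 0 := by
      apply Finset.sum_eq_zero
      intro j hj
      rw [Finset.mem_range] at hj
      rw [getD_ge m k 1 hj, drop_W2, Finset.card_eq_zero, Finset.filter_eq_empty_iff]
      intro v hv
      simp only [List.mem_toFinset, List.mem_replicate] at hv
      omega
    have h1 : (∑ i ∈ Finset.range m,
        (((List.range' 1 m ++ List.replicate k 1).drop (i + 1)).toFinset.filter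
          (fun v => v < (List.range' 1 m ++ List.replicate k 1).getD i 0)).card) =
        ∑ i ∈ Finset.range m, (if i = 0 then 0 else 1) := by
      apply Finset.sum_congr rfl
      intro i hi
      rw [Finset.mem_range] at hi
      rw [getD_lt m k 1 hi, drop_W m k 1 hi]
      by_cases h0 : i = 0
      · rw [if_pos h0, Finset.card_eq_zero, Finset.filter_eq_empty_iff]
        intro v hv
        simp only [List.mem_toFinset, List.mem_append, List.mem_range'_1,
          List.mem_replicate] at hv
        omega
      · rw [if_neg h0]
        have he : ((List.range' (2+i) (m-(i+1)) ++ List.replicate k 1).toFinset.filter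
            (fun v => v < 1 + i)) = {1} := by
          ext v
          simp only [Finset.mem_filter, List.mem_toFinset, List.mem_append, List.mem_range'_1,
            List.mem_replicate, Finset.mem_singleton]
          omega
        rw [he, Finset.card_singleton]
    rw [h1, h2, Nat.add_zero]
    obtain ⟨m', rfl⟩ : ∃ m', m = m' + 1 := ⟨m - 1, by omega⟩
    rw [Finset.sum_range_succ']
    simp
  · rw [lbStat_eq, hlen m, sum_range_add']
    have h1 : (∑ i ∈ Finset.range m,
        (((List.range' 1 m ++ List.replicate k m).take i).toFinset.filter
          (fun v => (List.range' 1 m ++ List.replicate k m).getD i 0 < v)).card) = 0 := by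
      apply Finset.sum_eq_zero
      intro i hi
      rw [Finset.mem_range] at hi
      rw [getD_lt m k m hi, take_W m k m hi.le, Finset.card_eq_zero,
        Finset.filter_eq_empty_iff]
      intro v hv
      simp only [List.mem_toFinset, List.mem_range'_1] at hv
      omega
    have h2 : (∑ j ∈ Finset.range k,
        (((List.range' 1 m ++ List.replicate k m).take (m + j)).toFinset.filter
          (fun v => (List.range' 1 m ++ List.replicate k m).getD (m + j) 0 < v)).card) = 0 := by
      apply Finset.sum_eq_zero
      intro j hj
      rw [Finset.mem_range] at hj
      rw [getD_ge m k m hj, take_W2, Finset.card_eq_zero, Finset.filter_eq_empty_iff]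
      intro v hv
      simp only [List.mem_toFinset, List.mem_append, List.mem_range'_1,
        List.mem_replicate] at hv
      omega
    rw [h1, h2]
  · rw [rsStat_eq, hlen m, sum_range_add']
    have h1 : (∑ i ∈ Finset.range m,
        (((List.range' 1 m ++ List.replicate k m).drop (i + 1)).toFinset.filter
          (fun v => v < (List.range' 1 m ++ List.replicate k m).getD i 0)).card) = 0 := by
      apply Finset.sum_eq_zero
      intro i hi
      rw [Finset.mem_range] at hi
      rw [getD_lt m k m hi, drop_W m k m hi, Finset.card_eq_zero, Finset.filter_eq_empty_iff]
      intro v hv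
      simp only [List.mem_toFinset, List.mem_append, List.mem_range'_1,
        List.mem_replicate] at hv
      omega
    have h2 : (∑ j ∈ Finset.range k,
        (((List.range' 1 m ++ List.replicate k m).drop (m + j + 1)).toFinset.filter
          (fun v => v < (List.range' 1 m ++ List.replicate k m).getD (m + j) 0)).card) = 0 := by
      apply Finset.sum_eq_zero
      intro j hj
      rw [Finset.mem_range] at hj
      rw [getD_ge m k m hj, drop_W2, Finset.card_eq_zero, Finset.filter_eq_empty_iff]
      intro v hv
      simp only [List.mem_toFinset, List.mem_replicate] at hv
      omega
    rw [h1, h2]
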